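/- Let 0<q<1 and let (B_s)_{s≥0} satisfy the q-Brownian hypotheses. Then for all 0 ≤ s < t: E[(B_t − B_s)^4] = (t−s)·((q+2)·t − 3·q·s). -/

import Mathlib

open MeasureTheory Filter

/-- `[n]_q = 1 + q + ⋯ + q^{n-1}`. -/
noncomputable def qNat (q : ℝ) (n : ℕ) : ℝ := ∑ i ∈ Finset.range n, q ^ i

/-- `[n]_q! = [1]_q [2]_q ⋯ [n]_q`. -/
noncomputable def qFact (q : ℝ) (n : ℕ) : ℝ := ∏ i ∈ Finset.range n, qNat q (i + 1)

/-- Monic continuous q-Hermite polynomials: `h_0 = 1`, `h_1 = x`,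
`x·h_n(x;t) = h_{n+1}(x;t) + t·[n]_q·h_{n−1}(x;t)`. -/
noncomputable def qH (q : ℝ) : ℕ → ℝ → ℝ → ℝ
  | 0, _, _ => 1
  | 1, x, _ => x
  | (n + 2), x, t => x * qH q (n + 1) x t - t * qNat q (n + 1) * qH q n x t

lemma qH_zero' (q x t : ℝ) : qH q 0 x t = 1 := rfl
lemma qH_one' (q x t : ℝ) : qH q 1 x t = x := rfl
lemma qH_two' (q x t : ℝ) : qH q 2 x t = x ^ 2 - t := by
  show x * x - t * qNat q 1 * 1 = _
  simp [qNat]; ring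
lemma qH_three' (q x t : ℝ) : qH q 3 x t = x ^ 3 - (2 + q) * t * x := by
  show x * qH q 2 x t - t * qNat q 2 * x = _
  simp [qH_two', qNat, Finset.sum_range_succ]; ring
lemma qH_four' (q x t : ℝ) :
    qH q 4 x t = x ^ 4 - (3 + 2 * q + q ^ 2) * t * x ^ 2 + (1 + q + q ^ 2) * t ^ 2 := by
  show x * qH q 3 x t - t * qNat q 3 * qH q 2 x t = _
  simp [qH_two', qH_three', qNat, Finset.sum_range_succ]; ring

lemma qFact_zero' (q : ℝ) : qFact q 0 = 1 := rfl
lemma qFact_one' (q : ℝ) : qFact q 1 = 1 := by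
  simp [qFact, qNat]
lemma qFact_two' (q : ℝ) : qFact q 2 = 1 + q := by
  simp [qFact, qNat, Finset.prod_range_succ, Finset.sum_range_succ]

lemma qH_continuous (q t : ℝ) (n : ℕ) : Continuous fun x => qH q n x t := by
  have key : ∀ m : ℕ, Continuous (fun x => qH q m x t) ∧
      Continuous (fun x => qH q (m + 1) x t) := by
    intro m
    induction m with
    | zero => exact ⟨continuous_const, continuous_id⟩
    | succ k ih =>
      refine ⟨ih.2, ?_⟩
      show Continuous fun x => qH q (k + 2) x t
      simp only [qH]
      exact (continuous_id.mul ih.2).sub (continuous_const.mul ih.1)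
  exact (key n).1

lemma qH_at_zero (q : ℝ) (m : ℕ) (hm : 1 ≤ m) : qH q m 0 0 = 0 := by
  match m with
  | 1 => rfl
  | (k + 2) => simp [qH]

noncomputable def qCoef (q s t : ℝ) : ℕ → ℝ
  | 0 => 1
  | 1 => (3 + 2 * q + q ^ 2) * t + 6 * s
  | 2 => (2 + q) * t ^ 2 + 6 * t * s + (2 + q) * s ^ 2
  | 3 => -4
  | 4 => -4 * (2 + q) * (t + s)
  | 5 => 6
  | 6 => 6 * t + (3 + 2 * q + q ^ 2) * s
  | 7 => -4
  | _ => 1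

def qIdxN : ℕ → ℕ
  | 0 => 4 | 1 => 2 | 2 => 0 | 3 => 3 | 4 => 1 | 5 => 2 | 6 => 0 | 7 => 1 | _ => 0

def qIdxM : ℕ → ℕ
  | 0 => 0 | 1 => 0 | 2 => 0 | 3 => 1 | 4 => 1 | 5 => 2 | 6 => 2 | 7 => 3 | _ => 4

lemma expand4 (q s t x y : ℝ) :
    (x - y) ^ 4 = ∑ i ∈ Finset.range 9,
      qCoef q s t i * (qH q (qIdxN i) x t * qH q (qIdxM i) y s) := by
  simp only [Finset.sum_range_succ, Finset.sum_range_zero]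
  norm_num [qCoef, qIdxN, qIdxM, qH_zero', qH_one', qH_two', qH_three', qH_four']
  ring

/-- for the q-Brownian motion and `0 ≤ s < t`,
`E[(B_t − B_s)^4] = (t−s)((q+2)t − 3qs)`. -/
theorem q_brownian_fourth_moment_of_increment
    {Ω : Type*} [m0 : MeasurableSpace Ω] (μ : Measure Ω) [IsProbabilityMeasure μ]
    (ℱ : Filtration ℝ m0) (q : ℝ) (hq0 : 0 < q) (hq1 : q < 1)
    (B : ℝ → Ω → ℝ) (hadp : Adapted ℱ B) (hB0 : ∀ ω, B 0 ω = 0)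
    (hbdd : ∀ s : ℝ, 0 ≤ s → ∀ᵐ ω ∂μ, |B s ω| ≤ 2 * Real.sqrt s / Real.sqrt (1 - q))
    (hmart : ∀ (n : ℕ) (s u : ℝ), 0 ≤ s → s ≤ u →
      μ[fun ω => qH q n (B u ω) u | ℱ s] =ᵐ[μ] fun ω => qH q n (B s ω) s)
    (horth : ∀ s : ℝ, 0 < s → ∀ m n : ℕ,
      ∫ ω, qH q n (B s ω) s * qH q m (B s ω) s ∂μ =
        if m = n then qFact q n * s ^ n else 0)
    (s t : ℝ) (hs : 0 ≤ s) (hst : s < t) :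
    ∫ ω, (B t ω - B s ω) ^ 4 ∂μ = (t - s) * ((q + 2) * t - 3 * q * s) := by
  have ht : 0 < t := hs.trans_lt hst
  set Mt : ℝ := 2 * Real.sqrt t / Real.sqrt (1 - q) with hMt
  set Ms : ℝ := 2 * Real.sqrt s / Real.sqrt (1 - q) with hMs
  -- generic integrability of continuous functions of (B t, B s)
  have key : ∀ F : ℝ → ℝ → ℝ, Continuous (fun p : ℝ × ℝ => F p.1 p.2) →
      Integrable (fun ω => F (B t ω) (B s ω)) μ := by
    intro F hF
    have hK : IsCompact ((Set.Icc (-Mt) Mt) ×ˢ (Set.Icc (-Ms) Ms)) :=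
      isCompact_Icc.prod isCompact_Icc
    obtain ⟨C, hC⟩ := hK.exists_bound_of_continuousOn hF.continuousOn
    have hmeas : AEStronglyMeasurable (fun ω => F (B t ω) (B s ω)) μ :=
      (hF.comp_stronglyMeasurable
        (((hadp t).mono (ℱ.le t) le_rfl).prodMk ((hadp s).mono (ℱ.le s) le_rfl)).stronglyMeasurable).aestronglyMeasurable
    refine Integrable.mono' (integrable_const C) hmeas ?_
    filter_upwards [hbdd t ht.le, hbdd s hs] with ω h1 h2
    exact hC (B t ω, B s ω) ⟨abs_le.mp h1, abs_le.mp h2⟩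
  have intG : ∀ (c : ℝ) (n m : ℕ),
      Integrable (fun ω => c * (qH q n (B t ω) t * qH q m (B s ω) s)) μ := by
    intro c n m
    exact key (fun x y => c * (qH q n x t * qH q m y s))
      (continuous_const.mul (((qH_continuous q t n).comp continuous_fst).mul
        ((qH_continuous q s m).comp continuous_snd)))
  -- values of mixed integrals
  have hI : ∀ n m : ℕ,
      ∫ ω, qH q n (B t ω) t * qH q m (B s ω) s ∂μ =
        if m = n then qFact q n * s ^ n else 0 := by
    intro n m
    rcases eq_or_lt_of_le hs with hs0 | hs0
    · -- s = 0
      rcases Nat.eq_zero_or_pos m with hm | hm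
      · subst hm
        have h0 : ∫ ω, qH q n (B t ω) t * qH q 0 (B s ω) s ∂μ =
            ∫ ω, qH q n (B t ω) t * qH q 0 (B t ω) t ∂μ := by
          simp [qH_zero']
        rw [h0, horth t ht 0 n]
        rcases Nat.eq_zero_or_pos n with hn | hn
        · subst hn; simp
        · rw [if_neg (by omega), if_neg (by omega)]
      · have hBs : ∀ ω, B s ω = 0 := by intro ω; rw [← hs0]; exact hB0 ω
        have h0 : (fun ω => qH q n (B t ω) t * qH q m (B s ω) s) = fun _ => (0 : ℝ) := by
          funext ω; rw [hBs, ← hs0, qH_at_zero q m hm, mul_zero]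
        rw [h0, integral_zero]
        split_ifs with h
        · subst h
          rw [← hs0, zero_pow (by omega), mul_zero]
        · rfl
    · -- s > 0
      set f : Ω → ℝ := fun ω => qH q n (B t ω) t with hf
      set g : Ω → ℝ := fun ω => qH q m (B s ω) s with hg
      have hg_meas : StronglyMeasurable[ℱ s] g :=
        (qH_continuous q s m).comp_stronglyMeasurable (hadp s).stronglyMeasurable
      have hf_int : Integrable f μ :=
        key (fun x _ => qH q n x t) ((qH_continuous q t n).comp continuous_fst)
      have hgf_int : Integrable (g * f) μ :=
        key (fun x y => qH q m y s * qH q n x t)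
          (((qH_continuous q s m).comp continuous_snd).mul
            ((qH_continuous q t n).comp continuous_fst))
      have h1 : μ[g * f | ℱ s] =ᵐ[μ] g * μ[f | ℱ s] :=
        condExp_mul_of_stronglyMeasurable_left hg_meas hgf_int hf_int
      have h2 : μ[f | ℱ s] =ᵐ[μ] fun ω => qH q n (B s ω) s := hmart n s t hs hst.le
      calc ∫ ω, f ω * g ω ∂μ = ∫ ω, (g * f) ω ∂μ := by
            congr 1; funext ω; exact mul_comm _ _
        _ = ∫ ω, (μ[g * f | ℱ s]) ω ∂μ := (integral_condExp (ℱ.le s)).symm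
        _ = ∫ ω, (g * μ[f | ℱ s]) ω ∂μ := integral_congr_ae h1
        _ = ∫ ω, qH q n (B s ω) s * qH q m (B s ω) s ∂μ := by
            refine integral_congr_ae ?_
            filter_upwards [h2] with ω hω
            simp only [Pi.mul_apply, hω, hg]
            ring
        _ = if m = n then qFact q n * s ^ n else 0 := horth s hs0 m n
  -- assemble
  simp only [expand4 q s t]
  rw [integral_finset_sum _ (fun i _ => intG _ _ _)]
  simp only [integral_const_mul, hI]
  simp only [Finset.sum_range_succ, Finset.sum_range_zero]
  norm_num [qCoef, qIdxN, qIdxM, qFact_zero', qFact_one', qFact_two']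
  ring
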